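/- arXiv:1401.7123 — 5 statements merged into one kernel-verified Lean document; each statement's English description precedes it below -/
import Mathlib

section
/- For all natural numbers n and k with k ≥ 1, the number of partitions of n into exactly k parts such that any two distinct parts differ by at least 1 (i.e., all parts are distinct) and every part is at least 2, equals the alternating sum over i from 0 to k of (-1)^i times the number of partitions of n - i into exactly k - i distinct parts: p^{(1)}_k(n,2) = Σ_{i=0}^{k} (-1)^i p^{(1)}_{k-i}(n-i). Here any term whose first argument would be negative is taken to be 0. -/
/-- A multiset of naturals is `d`-distant if any two parts occupying different
positions (i.e. counting multiplicity) differ by at least `d`.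
For `d = 1` this says all parts are distinct; for `d = 0` it is no constraint. -/
def Multiset.DDistant (d : ℕ) (s : Multiset ℕ) : Prop :=
  ∀ a ∈ s, ∀ b ∈ s.erase a, d ≤ max a b - min a b

/-- `p^{(d)}_k(n)`: the number of partitions of `n` into exactly `k` parts
with pairwise differences at least `d`. -/
noncomputable def distantPartitions (d k n : ℕ) : ℕ :=
  Nat.card {p : n.Partition // p.parts.card = k ∧ Multiset.DDistant d p.parts}

/-- `p^{(d)}_k(n, r)`: the number of partitions of `n` into exactly `k` parts
with pairwise differences at least `d` and every part at least `r`. -/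
noncomputable def distantPartitionsMin (d k n r : ℕ) : ℕ :=
  Nat.card {p : n.Partition //
    p.parts.card = k ∧ Multiset.DDistant d p.parts ∧ ∀ a ∈ p.parts, r ≤ a}

lemma ddistant_one_iff (s : Multiset ℕ) : s.DDistant 1 ↔ s.Nodup := by
  constructor
  · intro h
    rw [Multiset.nodup_iff_count_le_one]
    intro a
    by_contra hc
    push_neg at hc
    have ha : a ∈ s := by rw [← Multiset.count_pos]; omega
    have hb : a ∈ s.erase a := by
      rw [← Multiset.count_pos, Multiset.count_erase_self]; omega
    have := h a ha a hb
    simp at this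
  · intro h a ha b hb
    have hbs : b ∈ s := Multiset.mem_of_mem_erase hb
    have hne : a ≠ b := by
      rintro rfl
      exact h.notMem_erase hb
    omega

def theEquiv (k n : ℕ) :
    {p : (n+1).Partition // p.parts.card = (k+1) ∧ Multiset.DDistant 1 p.parts} ≃
    ({p : (n+1).Partition // p.parts.card = (k+1) ∧ Multiset.DDistant 1 p.parts ∧
        ∀ a ∈ p.parts, 2 ≤ a} ⊕
     {p : n.Partition // p.parts.card = k ∧ Multiset.DDistant 1 p.parts ∧
        ∀ a ∈ p.parts, 2 ≤ a}) where
  toFun p :=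
    if h : 1 ∈ p.1.parts then
      Sum.inr ⟨⟨p.1.parts.erase 1,
        fun ha => p.1.parts_pos (Multiset.mem_of_mem_erase ha),
        by
          have hs : (1 ::ₘ p.1.parts.erase 1).sum = n + 1 := by
            rw [Multiset.cons_erase h]; exact p.1.parts_sum
          rw [Multiset.sum_cons] at hs
          omega⟩,
        by
          have hd := (ddistant_one_iff _).1 p.2.2
          refine ⟨?_, ?_, ?_⟩
          · rw [Multiset.card_erase_of_mem h, p.2.1]; rfl
          · exact (ddistant_one_iff _).2 (hd.erase 1)
          · intro a ha
            have h1 : a ∈ p.1.parts := Multiset.mem_of_mem_erase ha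
            have hpos := p.1.parts_pos h1
            have hne : a ≠ 1 := by
              rintro rfl
              have : (1:ℕ) ∉ p.1.parts.erase 1 := by
                rw [← Multiset.count_pos, Multiset.count_erase_self]
                have := Multiset.nodup_iff_count_le_one.1 hd 1
                omega
              exact this ha
            omega⟩
    else
      Sum.inl ⟨p.1, p.2.1, p.2.2, fun a ha => by
        have := p.1.parts_pos ha
        have : a ≠ 1 := fun e => h (e ▸ ha)
        omega⟩
  invFun q :=
    match q with
    | Sum.inl p => ⟨p.1, p.2.1, p.2.2.1⟩
    | Sum.inr p =>
      ⟨⟨1 ::ₘ p.1.parts,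
        by
          intro a ha
          rcases Multiset.mem_cons.1 ha with rfl | h
          · omega
          · exact p.1.parts_pos h,
        by rw [Multiset.sum_cons, p.1.parts_sum]; omega⟩,
        by
          constructor
          · simp [p.2.1]
          · refine (ddistant_one_iff _).2 ?_
            rw [Multiset.nodup_cons]
            refine ⟨fun h1 => by have := p.2.2.2 1 h1; omega,
              (ddistant_one_iff _).1 p.2.2.1⟩⟩
  left_inv p := by
    by_cases h : 1 ∈ p.1.parts
    · simp only [dif_pos h]
      exact Subtype.ext (Nat.Partition.ext (Multiset.cons_erase h))
    · simp only [dif_neg h]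
  right_inv q := by
    match q with
    | Sum.inl p =>
      have h1 : (1:ℕ) ∉ p.1.parts := fun h => by have := p.2.2.2 1 h; omega
      simp only [dif_neg h1]
    | Sum.inr p =>
      have h1 : (1:ℕ) ∈ 1 ::ₘ p.1.parts := Multiset.mem_cons_self 1 _
      simp only [dif_pos h1]
      congr 1
      exact Subtype.ext (Nat.Partition.ext (Multiset.erase_cons_head 1 _))

lemma rec_lemma (k n : ℕ) :
    distantPartitions 1 (k+1) (n+1)
      = distantPartitionsMin 1 (k+1) (n+1) 2 + distantPartitionsMin 1 k n 2 := by
  rw [distantPartitions, distantPartitionsMin, distantPartitionsMin, ← Nat.card_sum]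
  exact Nat.card_congr (theEquiv k n)

lemma zero_case (k : ℕ) :
    distantPartitionsMin 1 (k+1) 0 2 = 0 ∧ distantPartitions 1 (k+1) 0 = 0 := by
  constructor
  · rw [distantPartitionsMin, Nat.card_eq_zero]
    left
    rw [isEmpty_subtype]
    intro p
    have : p.parts = 0 := by
      have := p.parts_sum
      by_contra hne
      obtain ⟨a, ha⟩ := Multiset.exists_mem_of_ne_zero hne
      have := p.parts_pos ha
      have := Multiset.single_le_sum (fun x hx => Nat.zero_le x) a ha
      omega
    simp [this]
  · rw [distantPartitions, Nat.card_eq_zero]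
    left
    rw [isEmpty_subtype]
    intro p
    have : p.parts = 0 := by
      have := p.parts_sum
      by_contra hne
      obtain ⟨a, ha⟩ := Multiset.exists_mem_of_ne_zero hne
      have := p.parts_pos ha
      have := Multiset.single_le_sum (fun x hx => Nat.zero_le x) a ha
      omega
    simp [this]

lemma dpmZeroParts (n : ℕ) : distantPartitionsMin 1 0 n 2 = distantPartitions 1 0 n := by
  rw [distantPartitionsMin, distantPartitions]
  apply Nat.card_congr
  apply Equiv.subtypeEquivRight
  intro p
  constructor
  · intro ⟨h1, h2, _⟩; exact ⟨h1, h2⟩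
  · intro ⟨h1, h2⟩
    refine ⟨h1, h2, fun a ha => ?_⟩
    have : p.parts = 0 := Multiset.card_eq_zero.1 h1
    rw [this] at ha
    simp at ha

lemma main (k : ℕ) : ∀ n : ℕ,
    (distantPartitionsMin 1 k n 2 : ℤ) =
      ∑ i ∈ Finset.range (k + 1),
        (-1 : ℤ) ^ i * (if i ≤ n then (distantPartitions 1 (k - i) (n - i) : ℤ) else 0) := by
  induction k with
  | zero =>
    intro n
    simp [dpmZeroParts]
  | succ k ih =>
    intro n
    rw [Finset.sum_range_succ' (fun i => (-1:ℤ)^i *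
      (if i ≤ n then (distantPartitions 1 (k + 1 - i) (n - i) : ℤ) else 0))]
    simp only [pow_zero, one_mul, Nat.sub_zero, Nat.le_zero, if_pos (Nat.zero_le n)]
    cases n with
    | zero =>
      have hz := zero_case k
      have : ∀ i ∈ Finset.range (k+1), (-1:ℤ)^(i+1) *
          (if i + 1 ≤ 0 then (distantPartitions 1 (k + 1 - (i+1)) (0 - (i+1)) : ℤ) else 0) = 0 := by
        intro i _
        simp
      rw [Finset.sum_eq_zero this]
      simp [hz.1, hz.2]
    | succ m =>
      rw [rec_lemma k m]
      have heq : ∀ i ∈ Finset.range (k+1), (-1:ℤ)^(i+1) *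
          (if i + 1 ≤ m + 1 then (distantPartitions 1 (k + 1 - (i+1)) (m + 1 - (i+1)) : ℤ) else 0)
          = -((-1:ℤ)^i * (if i ≤ m then (distantPartitions 1 (k - i) (m - i) : ℤ) else 0)) := by
        intro i _
        have h1 : k + 1 - (i + 1) = k - i := by omega
        have h2 : m + 1 - (i + 1) = m - i := by omega
        simp only [h1, h2, Nat.add_le_add_iff_right, pow_succ]
        ring
      rw [Finset.sum_congr rfl heq, Finset.sum_neg_distrib, ← ih m]
      push_cast
      ring

/-- `p^{(1)}_k(n,2) = Σ_{i=0}^{k} (-1)^i p^{(1)}_{k-i}(n-i)`,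
where any term whose first argument would be negative is taken to be `0`. -/
theorem stmt_0 (n k : ℕ) (hk : 1 ≤ k) :
    (distantPartitionsMin 1 k n 2 : ℤ) =
      ∑ i ∈ Finset.range (k + 1),
        (-1 : ℤ) ^ i * (if i ≤ n then (distantPartitions 1 (k - i) (n - i) : ℤ) else 0) := by
  exact main k n
end

section
/- For all natural numbers n, k, and d with k ≥ 1 and n ≥ k, the number of partitions of n into exactly k parts in which any two distinct parts differ by at least d equals the number of partitions of n - 1 into exactly k - 1 parts with pairwise differences at least d and smallest part at least d + 1, plus the number of partitions of n - k into exactly k parts with pairwise differences at least d: p^{(d)}_k(n) = p^{(d)}_{k-1}(n-1, d+1) + p^{(d)}_k(n-k). -/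
private lemma map_erase_mem' (f : ℕ → ℕ) {s : Multiset ℕ} {a : ℕ} (h : a ∈ s) :
    (s.map f).erase (f a) = (s.erase a).map f := by
  conv_lhs => rw [← Multiset.cons_erase h]
  rw [Multiset.map_cons, Multiset.erase_cons_head]

private lemma sum_map_pred' {s : Multiset ℕ} (h : ∀ a ∈ s, 1 ≤ a) :
    (s.map (· - 1)).sum + Multiset.card s = s.sum := by
  induction s using Multiset.induction with
  | empty => simp
  | cons a t ih =>
    have ha : 1 ≤ a := h a (Multiset.mem_cons_self a t)
    have := ih (fun b hb => h b (Multiset.mem_cons_of_mem hb))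
    simp only [Multiset.map_cons, Multiset.sum_cons, Multiset.card_cons]
    omega

private lemma sum_map_succ' (s : Multiset ℕ) :
    (s.map (· + 1)).sum = s.sum + Multiset.card s := by
  induction s using Multiset.induction with
  | empty => simp
  | cons a t ih =>
    simp only [Multiset.map_cons, Multiset.sum_cons, Multiset.card_cons]
    omega

/-- `p^{(d)}_k(n) = p^{(d)}_{k-1}(n-1, d+1) + p^{(d)}_k(n-k)`. -/
theorem stmt_6 (n k d : ℕ) (hk : 1 ≤ k) (hn : k ≤ n) :
    distantPartitions d k n =
      distantPartitionsMin d (k - 1) (n - 1) (d + 1) + distantPartitions d k (n - k) := by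
  classical
  -- Split the partition count by whether `1` is a part.
  have hsplit :
      distantPartitions d k n =
        Nat.card {s : {p : n.Partition // p.parts.card = k ∧ Multiset.DDistant d p.parts} //
          1 ∈ s.1.parts} +
        Nat.card {s : {p : n.Partition // p.parts.card = k ∧ Multiset.DDistant d p.parts} //
          1 ∉ s.1.parts} := by
    rw [distantPartitions, ← Nat.card_sum,
      Nat.card_congr (Equiv.sumCompl (fun s : {p : n.Partition //
        p.parts.card = k ∧ Multiset.DDistant d p.parts} => 1 ∈ s.1.parts))]
  rw [hsplit]
  congr 1
  · -- partitions containing 1  ↔  partitions of n-1 with min ≥ d+1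
    rw [distantPartitionsMin]
    refine Nat.card_congr ?_
    refine
      { toFun := fun s => ⟨⟨s.1.1.parts.erase 1,
          fun hi => s.1.1.parts_pos (Multiset.mem_of_mem_erase hi), ?_⟩, ?_, ?_, ?_⟩
        invFun := fun q => ⟨⟨⟨1 ::ₘ q.1.parts,
          fun hi => ?_, ?_⟩, ?_, ?_⟩, Multiset.mem_cons_self 1 _⟩
        left_inv := ?_
        right_inv := ?_ }
    · -- sum of erase
      have h1 := s.2
      have := Multiset.cons_erase h1
      have hsum : s.1.1.parts.sum = n := s.1.1.parts_sum
      have : (1 ::ₘ s.1.1.parts.erase 1).sum = n := by rw [this]; exact hsum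
      rw [Multiset.sum_cons] at this
      omega
    · -- card of erase
      rw [Multiset.card_erase_of_mem s.2, s.1.2.1, Nat.pred_eq_sub_one]
    · -- DDistant of erase
      intro a ha b hb
      refine s.1.2.2 a (Multiset.mem_of_mem_erase ha) b ?_
      rw [Multiset.erase_comm] at hb
      exact Multiset.mem_of_mem_erase hb
    · -- min ≥ d + 1
      intro a ha
      have hpos : 0 < a := s.1.1.parts_pos (Multiset.mem_of_mem_erase ha)
      have := s.1.2.2 1 s.2 a ha
      omega
    · -- positivity of cons
      rcases Multiset.mem_cons.1 hi with h | h
      · omega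
      · exact q.1.parts_pos h
    · -- sum of cons
      rw [Multiset.sum_cons, q.1.parts_sum]
      omega
    · -- card of cons
      rw [Multiset.card_cons, q.2.1]
      omega
    · -- DDistant of cons
      intro a ha b hb
      by_cases hae : a = 1
      · subst hae
        rw [Multiset.erase_cons_head] at hb
        have := q.2.2.2 b hb
        omega
      · rw [Multiset.erase_cons_tail _ fun h => hae h.symm] at hb
        have ha' : a ∈ q.1.parts := by
          rcases Multiset.mem_cons.1 ha with h | h
          · exact absurd h hae
          · exact h
        rcases Multiset.mem_cons.1 hb with h | h
        · subst h
          have := q.2.2.2 a ha'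
          omega
        · exact q.2.2.1 a ha' b h
    · -- left inverse
      intro s
      exact Subtype.ext (Subtype.ext (Nat.Partition.ext (Multiset.cons_erase s.2)))
    · -- right inverse
      intro q
      exact Subtype.ext (Nat.Partition.ext (Multiset.erase_cons_head 1 q.1.parts))
  · -- partitions not containing 1  ↔  partitions of n - k
    rw [distantPartitions]
    refine Nat.card_congr ?_
    have key : ∀ s : {s : {p : n.Partition //
        p.parts.card = k ∧ Multiset.DDistant d p.parts} // 1 ∉ s.1.parts},
        ∀ a ∈ s.1.1.parts, 2 ≤ a := by
      intro s a ha
      have := s.1.1.parts_pos ha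
      have : a ≠ 1 := fun h => s.2 (h ▸ ha)
      omega
    refine
      { toFun := fun s => ⟨⟨s.1.1.parts.map (· - 1), fun hi => ?_, ?_⟩, ?_, ?_⟩
        invFun := fun q => ⟨⟨⟨q.1.parts.map (· + 1), fun hi => ?_, ?_⟩, ?_, ?_⟩, ?_⟩
        left_inv := ?_
        right_inv := ?_ }
    · -- positivity of map (· - 1)
      rcases Multiset.mem_map.1 hi with ⟨a, ha, rfl⟩
      have := key s a ha
      omega
    · -- sum of map (· - 1)
      have h1 : ∀ a ∈ s.1.1.parts, 1 ≤ a := fun a ha => le_of_lt (key s a ha)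
      have := sum_map_pred' h1
      rw [s.1.2.1, s.1.1.parts_sum] at this
      omega
    · -- card
      rw [Multiset.card_map, s.1.2.1]
    · -- DDistant of map (· - 1)
      intro a' ha' b' hb'
      rcases Multiset.mem_map.1 ha' with ⟨a, ha, rfl⟩
      rw [show a - 1 = (fun x => x - 1) a from rfl, map_erase_mem' _ ha] at hb'
      rcases Multiset.mem_map.1 hb' with ⟨b, hb, rfl⟩
      have hdd := s.1.2.2 a ha b hb
      have h2a := key s a ha
      have h2b := key s b (Multiset.mem_of_mem_erase hb)
      omega
    · -- positivity of map (· + 1)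
      rcases Multiset.mem_map.1 hi with ⟨a, _, rfl⟩
      omega
    · -- sum of map (· + 1)
      have h3 := sum_map_succ' q.1.parts
      have h1 := q.1.parts_sum
      have h2 := q.2.1
      omega
    · -- card
      rw [Multiset.card_map, q.2.1]
    · -- DDistant of map (· + 1)
      intro a' ha' b' hb'
      rcases Multiset.mem_map.1 ha' with ⟨a, ha, rfl⟩
      rw [show a + 1 = (fun x => x + 1) a from rfl, map_erase_mem' _ ha] at hb'
      rcases Multiset.mem_map.1 hb' with ⟨b, hb, rfl⟩
      have hdd := q.2.2 a ha b hb
      omega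
    · -- 1 not a part
      intro h1
      rcases Multiset.mem_map.1 h1 with ⟨a, hmem, ha⟩
      have := q.1.parts_pos hmem
      omega
    · -- left inverse
      intro s
      refine Subtype.ext (Subtype.ext (Nat.Partition.ext ?_))
      show (s.1.1.parts.map (· - 1)).map (· + 1) = s.1.1.parts
      rw [Multiset.map_map]
      calc s.1.1.parts.map ((· + 1) ∘ (· - 1)) = s.1.1.parts.map id :=
            Multiset.map_congr rfl (fun a ha => by
              have := key s a ha
              simp only [Function.comp_apply, id_eq]
              omega)
        _ = s.1.1.parts := Multiset.map_id _
    · -- right inverse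
      intro q
      refine Subtype.ext (Nat.Partition.ext ?_)
      show (q.1.parts.map (· + 1)).map (· - 1) = q.1.parts
      rw [Multiset.map_map]
      calc q.1.parts.map ((· - 1) ∘ (· + 1)) = q.1.parts.map id :=
            Multiset.map_congr rfl (fun a _ => by
              simp only [Function.comp_apply, id_eq]
              omega)
        _ = q.1.parts := Multiset.map_id _
end

section
/- For all natural numbers n, k, and d with k ≥ 1 and d ≥ 1, the number of partitions of n into exactly k parts in which any two distinct parts differ by at least d equals the sum over all integers i ≥ d with k·i ≤ n + d - 1 of the number of partitions of n - k·i + d - 1 into exactly k - 1 parts with pairwise differences at least d: p^{(d)}_k(n) = Σ_{i ≥ d} p^{(d)}_{k-1}(n - k·i + d - 1). (The sum has only finitely many nonzero terms.) -/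
lemma sum_lb (s : Multiset ℕ) (i : ℕ) (h : ∀ x ∈ s, i ≤ x) :
    s.card * i ≤ s.sum := by
  induction s using Multiset.induction with
  | empty => simp
  | cons a t ih =>
    simp only [Multiset.card_cons, Multiset.sum_cons]
    have := h a (by simp)
    have := ih (fun x hx => h x (by simp [hx]))
    nlinarith
lemma sum_map_sub (s : Multiset ℕ) (i : ℕ) (h : ∀ x ∈ s, i ≤ x) :
    (s.map (fun x => x - i)).sum = s.sum - s.card * i := by
  induction s using Multiset.induction with
  | empty => simp
  | cons a t ih =>
    simp only [Multiset.map_cons, Multiset.sum_cons, Multiset.card_cons]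
    have h1 := h a (by simp)
    have h2 := ih (fun x hx => h x (by simp [hx]))
    have h3 := sum_lb t i (fun x hx => h x (by simp [hx]))
    have h4 : (t.card + 1) * i = t.card * i + i := by ring
    omega
lemma sum_map_add (s : Multiset ℕ) (i : ℕ) :
    (s.map (fun x => x + i)).sum = s.sum + s.card * i := by
  induction s using Multiset.induction with
  | empty => simp
  | cons a t ih =>
    simp only [Multiset.map_cons, Multiset.sum_cons, Multiset.card_cons, ih]
    ring

lemma ddistant_iff {d : ℕ} (hd : 1 ≤ d) (s : Multiset ℕ) :
    s.DDistant d ↔ s.Nodup ∧ ∀ a ∈ s, ∀ b ∈ s, a ≠ b → d ≤ max a b - min a b := by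
  constructor
  · intro h
    have hnd : s.Nodup := by
      rw [Multiset.nodup_iff_count_le_one]
      intro a
      by_contra hc
      have ha : a ∈ s := by
        rw [← Multiset.count_pos]; omega
      have ha' : a ∈ s.erase a := by
        rw [← Multiset.count_pos, Multiset.count_erase_self]; omega
      have := h a ha a ha'
      simp at this; omega
    refine ⟨hnd, fun a ha b hb hab => h a ha b ?_⟩
    rw [Multiset.mem_erase_of_ne (Ne.symm hab)]; exact hb
  · rintro ⟨hnd, h⟩ a ha b hb
    exact h a ha b (Multiset.mem_of_mem_erase hb)
      (fun e => hnd.notMem_erase (e ▸ hb))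

noncomputable def mmin (s : Multiset ℕ) : ℕ := WithTop.untopD 0 s.toFinset.min

lemma mmin_mem {s : Multiset ℕ} (h : s ≠ 0) : mmin s ∈ s := by
  have h1 : s.toFinset.Nonempty := by simpa using h
  have h2 : mmin s = s.toFinset.min' h1 := by
    rw [mmin, ← Finset.coe_min' h1]; rfl
  rw [h2, ← Multiset.mem_toFinset]
  exact s.toFinset.min'_mem h1
lemma mmin_le {s : Multiset ℕ} {b : ℕ} (hb : b ∈ s) : mmin s ≤ b := by
  have h : s ≠ 0 := by rintro rfl; simp at hb
  have h1 : s.toFinset.Nonempty := by simpa using h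
  have h2 : mmin s = s.toFinset.min' h1 := by
    rw [mmin, ← Finset.coe_min' h1]; rfl
  rw [h2]
  exact s.toFinset.min'_le b (by simpa using hb)
lemma mmin_eq {s : Multiset ℕ} {m : ℕ} (hm : m ∈ s) (h : ∀ b ∈ s, m ≤ b) : mmin s = m :=
  le_antisymm (mmin_le hm) (h _ (mmin_mem (by rintro rfl; simp at hm)))

lemma mul_pred (k i : ℕ) (hk : 1 ≤ k) : k * i = i + (k - 1) * i := by
  cases k with
  | zero => omega
  | succ k' => simp [Nat.succ_mul, Nat.add_comm]

def up (n k d i : ℕ) (hd : 1 ≤ d) (hk : 1 ≤ k) (hdi : d ≤ i) (hik : k * i ≤ n + d - 1)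
    (q : Nat.Partition (n + d - 1 - k * i)) (hcard : q.parts.card = k - 1) :
    Nat.Partition n where
  parts := (i - d + 1) ::ₘ q.parts.map (fun x => x + i)
  parts_pos := by
    intro a ha
    rcases Multiset.mem_cons.1 ha with rfl | ha
    · omega
    · rcases Multiset.mem_map.1 ha with ⟨x, hx, rfl⟩
      have := q.parts_pos hx
      omega
  parts_sum := by
    rw [Multiset.sum_cons, sum_map_add, q.parts_sum, hcard]
    have := mul_pred k i hk
    omega

@[simp] lemma up_parts (n k d i : ℕ) (hd hk hdi hik q hcard) :
    (up n k d i hd hk hdi hik q hcard).parts = (i - d + 1) ::ₘ q.parts.map (fun x => x + i) := rfl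

def down (n k d i : ℕ) (p : Nat.Partition n)
    (hmem : i - d + 1 ∈ p.parts)
    (hge : ∀ b ∈ p.parts.erase (i - d + 1), i + 1 ≤ b)
    (hcard : p.parts.card = k) (hd : 1 ≤ d) (hdi : d ≤ i) (hk : 1 ≤ k) :
    Nat.Partition (n + d - 1 - k * i) where
  parts := (p.parts.erase (i - d + 1)).map (fun x => x - i)
  parts_pos := by
    intro a ha
    rcases Multiset.mem_map.1 ha with ⟨x, hx, rfl⟩
    have := hge x hx
    omega
  parts_sum := by
    rw [sum_map_sub _ i (fun x hx => by have := hge x hx; omega)]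
    have hE : (i - d + 1) + (p.parts.erase (i - d + 1)).sum = n := by
      conv_rhs => rw [← p.parts_sum, ← Multiset.cons_erase hmem]
      rw [Multiset.sum_cons]
    have hEcard : (p.parts.erase (i - d + 1)).card = k - 1 := by
      rw [Multiset.card_erase_of_mem hmem, hcard]; rfl
    have hlb := sum_lb _ (i + 1) hge
    have hmul := mul_pred k i hk
    rw [hEcard] at hlb ⊢
    have hx : (k - 1) * (i + 1) = (k - 1) * i + (k - 1) := by ring
    omega

@[simp] lemma down_parts (n k d i : ℕ) (p hmem hge hcard hd hdi hk) :
    (down n k d i p hmem hge hcard hd hdi hk).parts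
      = (p.parts.erase (i - d + 1)).map (fun x => x - i) := rfl


/-- `p^{(d)}_k(n) = Σ_{i ≥ d, k·i ≤ n+d-1} p^{(d)}_{k-1}(n + d - 1 - k·i)`. -/
theorem stmt_7 (n k d : ℕ) (hk : 1 ≤ k) (hd : 1 ≤ d) :
    distantPartitions d k n =
      ∑ i ∈ (Finset.range (n + d)).filter (fun i => d ≤ i ∧ k * i ≤ n + d - 1),
        distantPartitions d (k - 1) (n + d - 1 - k * i) := by
  classical
  have hcard : ∀ (d k n : ℕ), distantPartitions d k n =
      (Finset.univ.filter
        (fun p : Nat.Partition n => p.parts.card = k ∧ p.parts.DDistant d)).card := by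
    intro d k n
    rw [distantPartitions, Nat.card_eq_fintype_card, Fintype.card_subtype]
  rw [hcard]
  set F := (Finset.range (n + d)).filter (fun i => d ≤ i ∧ k * i ≤ n + d - 1) with hF
  set S := Finset.univ.filter
      (fun p : Nat.Partition n => p.parts.card = k ∧ p.parts.DDistant d) with hS
  -- key facts about the minimum of a valid partition
  have hkey : ∀ p : Nat.Partition n, p.parts.card = k → p.parts.DDistant d →
      mmin p.parts ∈ p.parts ∧ 1 ≤ mmin p.parts ∧
        ∀ b ∈ p.parts.erase (mmin p.parts), mmin p.parts + d ≤ b := by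
    intro p hc hdist
    have hne : p.parts ≠ 0 := by
      intro h0; rw [h0] at hc; simp at hc; omega
    have hm := mmin_mem hne
    refine ⟨hm, p.parts_pos hm, fun b hb => ?_⟩
    obtain ⟨hnd, hpw⟩ := (ddistant_iff hd _).1 hdist
    have hbs : b ∈ p.parts := Multiset.mem_of_mem_erase hb
    have hbne : b ≠ mmin p.parts := by
      rintro rfl; exact hnd.notMem_erase hb
    have h1 := hpw _ hm b hbs (Ne.symm hbne)
    have h2 := mmin_le hbs
    omega
  have hmaps : ∀ p ∈ S, mmin p.parts + d - 1 ∈ F := by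
    intro p hp
    rw [hS, Finset.mem_filter] at hp
    obtain ⟨-, hc, hdist⟩ := hp
    obtain ⟨hm, hm1, hge⟩ := hkey p hc hdist
    set m := mmin p.parts with hmdef
    have hmn : m ≤ n := by
      have := Multiset.single_le_sum (fun x _ => Nat.zero_le x) m hm
      rw [p.parts_sum] at this; exact this
    have hsum : m + (p.parts.erase m).sum = n := by
      conv_rhs => rw [← p.parts_sum, ← Multiset.cons_erase hm]
      rw [Multiset.sum_cons]
    have hcarde : (p.parts.erase m).card = k - 1 := by
      rw [Multiset.card_erase_of_mem hm, hc]; rfl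
    have hE := sum_lb _ (m + d) hge
    rw [hcarde] at hE
    have hmul := mul_pred k (m + d - 1) hk
    have h2 : (k - 1) * (m + d - 1) ≤ (k - 1) * (m + d) :=
      Nat.mul_le_mul_left _ (by omega)
    rw [hF, Finset.mem_filter, Finset.mem_range]
    refine ⟨by omega, by omega, by omega⟩
  rw [Finset.card_eq_sum_card_fiberwise hmaps]
  refine Finset.sum_congr rfl fun i hi => ?_
  rw [hcard]
  rw [hF, Finset.mem_filter, Finset.mem_range] at hi
  obtain ⟨hin, hdi, hik⟩ := hi
  -- extraction of facts for members of the fiber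
  have hfacts : ∀ p ∈ S.filter (fun a => mmin a.parts + d - 1 = i),
      i - d + 1 ∈ p.parts ∧ (∀ b ∈ p.parts.erase (i - d + 1), i + 1 ≤ b) ∧
        p.parts.card = k ∧ p.parts.DDistant d := by
    intro p hp
    rw [Finset.mem_filter, hS, Finset.mem_filter] at hp
    obtain ⟨⟨-, hc, hdist⟩, hfib⟩ := hp
    obtain ⟨hm, hm1, hge⟩ := hkey p hc hdist
    have hmi : mmin p.parts = i - d + 1 := by omega
    rw [hmi] at hm hge
    exact ⟨hm, fun b hb => by have := hge b hb; omega, hc, hdist⟩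
  have hqcard : ∀ q ∈ Finset.univ.filter
      (fun q : Nat.Partition (n + d - 1 - k * i) =>
        q.parts.card = k - 1 ∧ q.parts.DDistant d), q.parts.card = k - 1 := by
    intro q hq; rw [Finset.mem_filter] at hq; exact hq.2.1
  refine Finset.card_bij'
    (fun p hp => down n k d i p (hfacts p hp).1 (hfacts p hp).2.1 (hfacts p hp).2.2.1 hd hdi hk)
    (fun q hq => up n k d i hd hk hdi hik q (hqcard q hq)) ?_ ?_ ?_ ?_
  · -- down lands in target
    intro p hp
    obtain ⟨hmem, hge, hc, hdist⟩ := hfacts p hp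
    obtain ⟨hnd, hpw⟩ := (ddistant_iff hd _).1 hdist
    rw [Finset.mem_filter]
    refine ⟨Finset.mem_univ _, ?_, ?_⟩
    · rw [down_parts, Multiset.card_map, Multiset.card_erase_of_mem hmem, hc]; rfl
    · rw [down_parts, ddistant_iff hd]
      constructor
      · refine Multiset.Nodup.map_on ?_ (hnd.erase _)
        intro x hx y hy hxy
        have := hge x hx; have := hge y hy; omega
      · rintro a ha b hb hab
        rcases Multiset.mem_map.1 ha with ⟨x, hx, rfl⟩
        rcases Multiset.mem_map.1 hb with ⟨y, hy, rfl⟩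
        have hxy : x ≠ y := by rintro rfl; exact hab rfl
        have := hpw x (Multiset.mem_of_mem_erase hx) y (Multiset.mem_of_mem_erase hy) hxy
        have := hge x hx; have := hge y hy
        omega
  · -- up lands in fiber
    intro q hq
    have hq' := Finset.mem_filter.1 hq
    obtain ⟨-, hqc, hqdist⟩ := hq'
    obtain ⟨hqnd, hqpw⟩ := (ddistant_iff hd _).1 hqdist
    rw [Finset.mem_filter, hS, Finset.mem_filter]
    refine ⟨⟨Finset.mem_univ _, ?_, ?_⟩, ?_⟩
    · rw [up_parts, Multiset.card_cons, Multiset.card_map, hqc]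
      omega
    · rw [up_parts, ddistant_iff hd]
      constructor
      · rw [Multiset.nodup_cons]
        constructor
        · intro hmem
          rcases Multiset.mem_map.1 hmem with ⟨x, hx, hxe⟩
          have := q.parts_pos hx
          omega
        · refine Multiset.Nodup.map_on ?_ hqnd
          intro x hx y hy hxy
          omega
      · intro a ha b hb hab
        rcases Multiset.mem_cons.1 ha with rfl | ha <;>
          rcases Multiset.mem_cons.1 hb with hb' | hb'
        · exact absurd hb'.symm hab
        · rcases Multiset.mem_map.1 hb' with ⟨x, hx, rfl⟩
          have := q.parts_pos hx
          omega
        · rcases Multiset.mem_map.1 ha with ⟨x, hx, rfl⟩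
          subst hb'
          have := q.parts_pos hx
          omega
        · rcases Multiset.mem_map.1 ha with ⟨x, hx, rfl⟩
          rcases Multiset.mem_map.1 hb' with ⟨y, hy, rfl⟩
          have hxy : x ≠ y := by rintro rfl; exact hab rfl
          have := hqpw x hx y hy hxy
          omega
    · rw [up_parts]
      have : mmin ((i - d + 1) ::ₘ q.parts.map (fun x => x + i)) = i - d + 1 := by
        refine mmin_eq (Multiset.mem_cons_self _ _) ?_
        intro b hb
        rcases Multiset.mem_cons.1 hb with rfl | hb'
        · exact le_rfl
        · rcases Multiset.mem_map.1 hb' with ⟨x, hx, rfl⟩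
          omega
      rw [this]
      omega
  · -- left inverse
    intro p hp
    obtain ⟨hmem, hge, hc, hdist⟩ := hfacts p hp
    ext1
    rw [up_parts, down_parts, Multiset.map_map]
    have heq : ((p.parts.erase (i - d + 1)).map ((fun x => x + i) ∘ fun x => x - i))
        = p.parts.erase (i - d + 1) := by
      conv_rhs => rw [← Multiset.map_id (p.parts.erase (i - d + 1))]
      refine Multiset.map_congr rfl (fun x hx => ?_)
      have := hge x hx
      simp only [Function.comp_apply, id_eq]
      omega
    rw [heq, Multiset.cons_erase hmem]
  · -- right inverse
    intro q hq
    ext1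
    rw [down_parts, up_parts, Multiset.erase_cons_head, Multiset.map_map]
    conv_rhs => rw [← Multiset.map_id q.parts]
    refine Multiset.map_congr rfl (fun x hx => ?_)
    simp
end

section
/- For all natural numbers n, k, and d with k ≥ 1, the number of partitions of n into exactly k parts in which any two distinct parts differ by at least d equals the sum over all integers q ≥ 0 with q·k + 1 ≤ n of the number of partitions of n - q·k - 1 into exactly k - 1 parts with pairwise differences at least d and smallest part at least d + 1: p^{(d)}_k(n) = Σ_{q ≥ 0} p^{(d)}_{k-1}(n - q·k - 1, d+1). (The sum has only finitely many nonzero terms.) -/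
namespace Stmt8

/-- Characterization of `DDistant`. -/
lemma ddistant_iff (d : ℕ) (s : Multiset ℕ) :
    s.DDistant d ↔ (d ≠ 0 → s.Nodup) ∧ ∀ a ∈ s, ∀ b ∈ s, a < b → d ≤ b - a := by
  constructor
  · intro h
    refine ⟨fun hd => ?_, fun a ha b hb hab => ?_⟩
    · rw [Multiset.nodup_iff_count_le_one]
      intro a
      by_contra hc
      push_neg at hc
      have ha : a ∈ s := by rw [← Multiset.count_pos]; omega
      have ha' : a ∈ s.erase a := by
        rw [← Multiset.count_pos, Multiset.count_erase_self]; omega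
      have := h a ha a ha'
      omega
    · have hb' : b ∈ s.erase a := by
        rw [Multiset.mem_erase_of_ne (by omega : b ≠ a)]; exact hb
      have := h a ha b hb'
      omega
  · rintro ⟨hnd, hp⟩ a ha b hb
    rcases Nat.eq_zero_or_pos d with rfl | hd
    · exact Nat.zero_le _
    have hnd := hnd (by omega)
    have hbs : b ∈ s := Multiset.mem_of_mem_erase hb
    have hba : b ≠ a := by
      intro h; subst h
      have h1 : Multiset.count b (s.erase b) = Multiset.count b s - 1 :=
        Multiset.count_erase_self b s
      have h2 : Multiset.count b s ≤ 1 := Multiset.nodup_iff_count_le_one.mp hnd b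
      have h3 : 0 < Multiset.count b (s.erase b) := Multiset.count_pos.mpr hb
      omega
    rcases Nat.lt_or_ge a b with h1 | h1
    · have := hp a ha b hbs h1; omega
    · have := hp b hbs a ha (by omega); omega

lemma ddistant_erase {d : ℕ} {s : Multiset ℕ} (h : s.DDistant d) (a : ℕ) :
    (s.erase a).DDistant d := by
  rw [ddistant_iff] at h ⊢
  exact ⟨fun hd => (h.1 hd).erase a,
    fun x hx y hy hxy => h.2 x (Multiset.mem_of_mem_erase hx) y (Multiset.mem_of_mem_erase hy) hxy⟩

lemma ddistant_map_sub {d q : ℕ} {s : Multiset ℕ} (h : s.DDistant d)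
    (hq : ∀ a ∈ s, q + 1 ≤ a) : (s.map (fun a => a - q)).DDistant d := by
  rw [ddistant_iff] at h ⊢
  refine ⟨fun hd => ?_, fun a ha b hb hab => ?_⟩
  · exact (h.1 hd).map_on (fun x hx y hy hxy => by
      have := hq x hx; have := hq y hy; omega)
  · simp only [Multiset.mem_map] at ha hb
    obtain ⟨x, hx, rfl⟩ := ha
    obtain ⟨y, hy, rfl⟩ := hb
    have hx1 := hq x hx
    have hy1 := hq y hy
    have := h.2 x hx y hy (by omega)
    omega

lemma ddistant_cons_map_add {d q : ℕ} {s : Multiset ℕ} (h : s.DDistant d)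
    (hmin : ∀ a ∈ s, d + 1 ≤ a) :
    ((q + 1) ::ₘ s.map (fun a => a + q)).DDistant d := by
  rw [ddistant_iff] at h ⊢
  refine ⟨fun hd => ?_, fun a ha b hb hab => ?_⟩
  · rw [Multiset.nodup_cons]
    constructor
    · intro hmem
      simp only [Multiset.mem_map] at hmem
      obtain ⟨x, hx, hxe⟩ := hmem
      have := hmin x hx
      omega
    · exact (h.1 hd).map (fun x y hxy => by omega)
  · simp only [Multiset.mem_cons, Multiset.mem_map] at ha hb
    rcases ha with rfl | ⟨x, hx, rfl⟩ <;> rcases hb with hb | ⟨y, hy, rfl⟩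
    · omega
    · have := hmin y hy; omega
    · have := hmin x hx; omega
    · have := h.2 x hx y hy (by omega); omega

lemma sum_map_sub {q : ℕ} (s : Multiset ℕ) (h : ∀ a ∈ s, q ≤ a) :
    (s.map (fun a => a - q)).sum + q * s.card = s.sum := by
  induction s using Multiset.induction_on with
  | empty => simp
  | cons a t ih =>
    have ha : q ≤ a := h a (Multiset.mem_cons_self a t)
    have ih' := ih (fun x hx => h x (Multiset.mem_cons_of_mem hx))
    simp only [Multiset.map_cons, Multiset.sum_cons, Multiset.card_cons, Nat.mul_succ]
    omega

lemma sum_map_add {q : ℕ} (s : Multiset ℕ) :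
    (s.map (fun a => a + q)).sum = s.sum + q * s.card := by
  induction s using Multiset.induction_on with
  | empty => simp
  | cons a t ih =>
    simp only [Multiset.map_cons, Multiset.sum_cons, Multiset.card_cons, Nat.mul_succ]
    omega

lemma mul_card_le_sum {m : ℕ} (s : Multiset ℕ) (h : ∀ a ∈ s, m ≤ a) :
    m * s.card ≤ s.sum := by
  have := Multiset.card_nsmul_le_sum h
  simpa [smul_eq_mul, mul_comm] using this

/-- Multiset form of the counting conditions in `distantPartitions`. -/
def Q1 (d k n : ℕ) (s : Multiset ℕ) : Prop :=
  s.sum = n ∧ (∀ a ∈ s, 0 < a) ∧ s.card = k ∧ s.DDistant d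

/-- Multiset form of the counting conditions in `distantPartitionsMin _ _ _ (d+1)`. -/
def Q2 (d k n : ℕ) (s : Multiset ℕ) : Prop :=
  s.sum = n ∧ (∀ a ∈ s, 0 < a) ∧ s.card = k ∧ s.DDistant d ∧ ∀ a ∈ s, d + 1 ≤ a

def e1 (d k n : ℕ) :
    {p : n.Partition // p.parts.card = k ∧ Multiset.DDistant d p.parts} ≃
      {s : Multiset ℕ // Q1 d k n s} where
  toFun p := ⟨p.1.parts, p.1.parts_sum, fun _ ha => p.1.parts_pos ha, p.2.1, p.2.2⟩
  invFun s := ⟨⟨s.1, fun {_} ha => s.2.2.1 _ ha, s.2.1⟩, s.2.2.2.1, s.2.2.2.2⟩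
  left_inv p := rfl
  right_inv s := rfl

def e2 (d k n : ℕ) :
    {p : n.Partition // p.parts.card = k ∧ Multiset.DDistant d p.parts ∧
        ∀ a ∈ p.parts, d + 1 ≤ a} ≃
      {s : Multiset ℕ // Q2 d k n s} where
  toFun p := ⟨p.1.parts, p.1.parts_sum, fun _ ha => p.1.parts_pos ha, p.2.1, p.2.2.1, p.2.2.2⟩
  invFun s := ⟨⟨s.1, fun {_} ha => s.2.2.1 _ ha, s.2.1⟩, s.2.2.2.1, s.2.2.2.2.1, s.2.2.2.2.2⟩
  left_inv p := rfl
  right_inv s := rfl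

instance (d k n : ℕ) : Finite {s : Multiset ℕ // Q1 d k n s} :=
  Finite.of_equiv _ (e1 d k n)

instance (d k n : ℕ) : Finite {s : Multiset ℕ // Q2 d k n s} :=
  Finite.of_equiv _ (e2 d k n)

/-- The minimum element of a multiset of naturals (0 if empty). -/
noncomputable def mins (s : Multiset ℕ) : ℕ :=
  if h : s.toFinset.Nonempty then s.toFinset.min' h else 0

lemma mins_mem {s : Multiset ℕ} (h : s ≠ 0) : mins s ∈ s := by
  have hne : s.toFinset.Nonempty := Multiset.toFinset_nonempty.mpr h
  rw [mins, dif_pos hne]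
  exact Multiset.mem_toFinset.mp (Finset.min'_mem _ hne)

lemma mins_le {s : Multiset ℕ} {a : ℕ} (ha : a ∈ s) : mins s ≤ a := by
  have hne : s.toFinset.Nonempty := ⟨a, Multiset.mem_toFinset.mpr ha⟩
  rw [mins, dif_pos hne]
  exact Finset.min'_le _ a (Multiset.mem_toFinset.mpr ha)

def Fset (n k : ℕ) : Finset ℕ := (Finset.range n).filter fun q => q * k + 1 ≤ n

lemma map_sub_add (q : ℕ) (s : Multiset ℕ) (h : ∀ a ∈ s, q ≤ a) :
    (s.map (fun a => a - q)).map (fun a => a + q) = s := by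
  rw [Multiset.map_map]
  conv_rhs => rw [← Multiset.map_id s]
  apply Multiset.map_congr rfl
  intro a ha
  simp only [Function.comp_apply, id_eq]
  exact Nat.sub_add_cancel (h a ha)

lemma map_add_sub (q : ℕ) (s : Multiset ℕ) :
    (s.map (fun a => a + q)).map (fun a => a - q) = s := by
  rw [Multiset.map_map]
  conv_rhs => rw [← Multiset.map_id s]
  apply Multiset.map_congr rfl
  intro a _
  simp

lemma fwd_mem (n k' d : ℕ) (x : {s : Multiset ℕ // Q1 d (k' + 1) n s}) :
    mins x.1 - 1 ∈ Fset n (k' + 1) := by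
  obtain ⟨s, hsum, hpos, hcard, hdd⟩ := x
  show mins s - 1 ∈ Fset n (k' + 1)
  have hne : s ≠ 0 := by intro h0; rw [h0] at hcard; simp at hcard
  set m := mins s with hm
  have hmem : m ∈ s := mins_mem hne
  have hm1 : 1 ≤ m := hpos m hmem
  have hmin : ∀ a ∈ s, m ≤ a := fun a ha => mins_le ha
  have hkm : m * (k' + 1) ≤ n := by
    rw [← hsum, ← hcard]; exact mul_card_le_sum s hmin
  rw [Fset, Finset.mem_filter, Finset.mem_range]
  have h1 : (m - 1) * (k' + 1) + (k' + 1) = m * (k' + 1) := by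
    have := Nat.sub_one_mul m (k' + 1)
    have h2 : k' + 1 ≤ m * (k' + 1) := Nat.le_mul_of_pos_left _ (by omega)
    omega
  have h3 : m ≤ m * (k' + 1) := Nat.le_mul_of_pos_right _ (by omega)
  omega

lemma fwd_prop (n k' d : ℕ) (x : {s : Multiset ℕ // Q1 d (k' + 1) n s}) :
    Q2 d k' (n - (mins x.1 - 1) * (k' + 1) - 1)
      ((x.1.erase (mins x.1)).map (fun a => a - (mins x.1 - 1))) := by
  obtain ⟨s, hsum, hpos, hcard, hdd⟩ := x
  show Q2 d k' (n - (mins s - 1) * (k' + 1) - 1)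
    ((s.erase (mins s)).map (fun a => a - (mins s - 1)))
  have hne : s ≠ 0 := by intro h0; rw [h0] at hcard; simp at hcard
  set m := mins s with hm
  have hmem : m ∈ s := mins_mem hne
  have hm1 : 1 ≤ m := hpos m hmem
  have hmin : ∀ a ∈ s, m ≤ a := fun a ha => mins_le ha
  refine ⟨?_, ?_, ?_, ?_, ?_⟩
  · -- sum
    have herase : (s.erase m).sum + m = n := by
      have h1 : (m ::ₘ s.erase m) = s := Multiset.cons_erase hmem
      have h2 : (m ::ₘ s.erase m).sum = s.sum := by rw [h1]
      rw [Multiset.sum_cons] at h2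
      omega
    have hcard' : (s.erase m).card = k' := by
      rw [Multiset.card_erase_of_mem hmem, hcard]; rfl
    have hsub := sum_map_sub (q := m - 1) (s.erase m)
      (fun a ha => by have := hmin a (Multiset.mem_of_mem_erase ha); omega)
    rw [hcard'] at hsub
    have hmul : (m - 1) * (k' + 1) = (m - 1) * k' + (m - 1) := Nat.mul_succ _ _
    omega
  · -- positivity
    intro a ha
    simp only [Multiset.mem_map] at ha
    obtain ⟨b, hb, rfl⟩ := ha
    have := hmin b (Multiset.mem_of_mem_erase hb)
    omega
  · -- card
    rw [Multiset.card_map, Multiset.card_erase_of_mem hmem, hcard]; rfl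
  · -- DDistant
    exact ddistant_map_sub (ddistant_erase hdd m)
      (fun a ha => by have := hmin a (Multiset.mem_of_mem_erase ha); omega)
  · -- min ≥ d + 1
    intro a ha
    simp only [Multiset.mem_map] at ha
    obtain ⟨b, hb, rfl⟩ := ha
    have hbm : m ≤ b := hmin b (Multiset.mem_of_mem_erase hb)
    have := hdd m hmem b hb
    omega

noncomputable def fwd (n k' d : ℕ) (x : {s : Multiset ℕ // Q1 d (k' + 1) n s}) :
    Σ q : {q // q ∈ Fset n (k' + 1)},
      {s : Multiset ℕ // Q2 d k' (n - q.1 * (k' + 1) - 1) s} :=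
  ⟨⟨mins x.1 - 1, fwd_mem n k' d x⟩,
    ⟨(x.1.erase (mins x.1)).map (fun a => a - (mins x.1 - 1)), fwd_prop n k' d x⟩⟩

lemma bwd_prop (n k' d : ℕ)
    (y : Σ q : {q // q ∈ Fset n (k' + 1)},
      {s : Multiset ℕ // Q2 d k' (n - q.1 * (k' + 1) - 1) s}) :
    Q1 d (k' + 1) n ((y.1.1 + 1) ::ₘ y.2.1.map (fun a => a + y.1.1)) := by
  obtain ⟨⟨q, hq⟩, t, hsum, hpos, hcard, hdd, hmin⟩ := y
  rw [Fset, Finset.mem_filter, Finset.mem_range] at hq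
  have hsum' : t.sum = n - q * (k' + 1) - 1 := hsum
  show Q1 d (k' + 1) n ((q + 1) ::ₘ t.map (fun a => a + q))
  refine ⟨?_, ?_, ?_, ?_⟩
  · -- sum
    rw [Multiset.sum_cons, sum_map_add, hcard, hsum']
    have hmul : q * (k' + 1) = q * k' + q := Nat.mul_succ _ _
    omega
  · -- positivity
    intro a ha
    simp only [Multiset.mem_cons, Multiset.mem_map] at ha
    rcases ha with rfl | ⟨b, hb, rfl⟩
    · omega
    · have := hpos b hb; omega
  · -- card
    rw [Multiset.card_cons, Multiset.card_map, hcard]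
  · -- DDistant
    exact ddistant_cons_map_add hdd hmin

noncomputable def bwd (n k' d : ℕ)
    (y : Σ q : {q // q ∈ Fset n (k' + 1)},
      {s : Multiset ℕ // Q2 d k' (n - q.1 * (k' + 1) - 1) s}) :
    {s : Multiset ℕ // Q1 d (k' + 1) n s} :=
  ⟨(y.1.1 + 1) ::ₘ y.2.1.map (fun a => a + y.1.1), bwd_prop n k' d y⟩

lemma mins_cons_map_add {d q : ℕ} {t : Multiset ℕ} (hmint : ∀ a ∈ t, d + 1 ≤ a) :
    mins ((q + 1) ::ₘ t.map (fun a => a + q)) = q + 1 := by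
  apply le_antisymm
  · exact mins_le (Multiset.mem_cons_self _ _)
  · have hmem := mins_mem (s := (q + 1) ::ₘ t.map (fun a => a + q)) (by simp)
    rw [Multiset.mem_cons] at hmem
    rcases hmem with h | h
    · omega
    · rw [Multiset.mem_map] at h
      obtain ⟨b, hb, h⟩ := h
      have := hmint b hb
      omega

lemma key (n k' d : ℕ) :
    Nat.card {s : Multiset ℕ // Q1 d (k' + 1) n s} =
      ∑ q ∈ Fset n (k' + 1),
        Nat.card {s : Multiset ℕ // Q2 d k' (n - q * (k' + 1) - 1) s} := by
  classical
  have hLR : ∀ x, bwd n k' d (fwd n k' d x) = x := by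
    rintro ⟨s, hsum, hpos, hcard, hdd⟩
    apply Subtype.ext
    show (mins s - 1 + 1) ::ₘ
        ((s.erase (mins s)).map (fun a => a - (mins s - 1))).map
          (fun a => a + (mins s - 1)) = s
    have hne : s ≠ 0 := by intro h0; rw [h0] at hcard; simp at hcard
    have hmem : mins s ∈ s := mins_mem hne
    have hm1 : 1 ≤ mins s := hpos _ hmem
    rw [map_sub_add _ _ (fun a ha => by
      have := mins_le (Multiset.mem_of_mem_erase ha); omega)]
    rw [show mins s - 1 + 1 = mins s by omega]
    exact Multiset.cons_erase hmem
  have hRL : ∀ y, fwd n k' d (bwd n k' d y) = y := by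
    rintro ⟨⟨q, hq⟩, t, hsum, hpos, hcard, hdd, hmint⟩
    have hminc := mins_cons_map_add (q := q) hmint
    apply Sigma.subtype_ext
    · apply Subtype.ext
      show mins ((q + 1) ::ₘ t.map (fun a => a + q)) - 1 = q
      omega
    · show (((q + 1) ::ₘ t.map (fun a => a + q)).erase
          (mins ((q + 1) ::ₘ t.map (fun a => a + q)))).map
          (fun a => a - (mins ((q + 1) ::ₘ t.map (fun a => a + q)) - 1)) = t
      rw [hminc, Multiset.erase_cons_head, Nat.add_sub_cancel]
      exact map_add_sub q t
  rw [Nat.card_congr (Equiv.mk (fwd n k' d) (bwd n k' d) hLR hRL)]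
  letI : ∀ q : {q // q ∈ Fset n (k' + 1)},
      Fintype {s : Multiset ℕ // Q2 d k' (n - q.1 * (k' + 1) - 1) s} :=
    fun q => Fintype.ofFinite {s : Multiset ℕ // Q2 d k' (n - q.1 * (k' + 1) - 1) s}
  rw [Nat.card_eq_fintype_card, Fintype.card_sigma]
  rw [← Finset.sum_coe_sort (Fset n (k' + 1))
    (fun q => Nat.card {s : Multiset ℕ // Q2 d k' (n - q * (k' + 1) - 1) s})]
  exact Finset.sum_congr rfl (fun q _ => Nat.card_eq_fintype_card.symm)

end Stmt8

/-- `p^{(d)}_k(n) = Σ_{q ≥ 0, q·k+1 ≤ n} p^{(d)}_{k-1}(n - q·k - 1, d+1)`. -/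
theorem stmt_8 (n k d : ℕ) (hk : 1 ≤ k) :
    distantPartitions d k n =
      ∑ q ∈ (Finset.range n).filter (fun q => q * k + 1 ≤ n),
        distantPartitionsMin d (k - 1) (n - q * k - 1) (d + 1) := by
  obtain ⟨k', rfl⟩ : ∃ k', k = k' + 1 := ⟨k - 1, by omega⟩
  have h1 : distantPartitions d (k' + 1) n =
      Nat.card {s : Multiset ℕ // Stmt8.Q1 d (k' + 1) n s} :=
    Nat.card_congr (Stmt8.e1 d (k' + 1) n)
  have h2 : ∀ q, distantPartitionsMin d k' (n - q * (k' + 1) - 1) (d + 1) =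
      Nat.card {s : Multiset ℕ // Stmt8.Q2 d k' (n - q * (k' + 1) - 1) s} :=
    fun q => Nat.card_congr (Stmt8.e2 d k' (n - q * (k' + 1) - 1))
  rw [h1, Stmt8.key n k' d]
  simp only [Nat.add_sub_cancel, Stmt8.Fset]
  exact Finset.sum_congr rfl (fun q _ => (h2 q).symm)
end

section
/- For all natural numbers n and d, the number of partitions of n equals the number of partitions of 2n + d·C(n,2) into exactly n parts in which any two distinct parts differ by at least d: p(n) = p^{(d)}_n(2n + d·n(n-1)/2). -/
def dpad (d : ℕ) : List ℕ → List ℕ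
  | [] => []
  | a :: l => (a + 1 + d * l.length) :: dpad d l

def dun (d : ℕ) : List ℕ → List ℕ
  | [] => []
  | a :: l => (a - (1 + d * l.length)) :: dun d l

theorem dpad_length (d : ℕ) : ∀ l : List ℕ, (dpad d l).length = l.length
  | [] => rfl
  | a :: l => by simp [dpad, dpad_length d l]

theorem dun_length (d : ℕ) : ∀ l : List ℕ, (dun d l).length = l.length
  | [] => rfl
  | a :: l => by simp [dun, dun_length d l]

theorem dpad_sum (d : ℕ) : ∀ l : List ℕ,
    (dpad d l).sum = l.sum + l.length + d * l.length.choose 2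
  | [] => rfl
  | a :: l => by
    have h := dpad_sum d l
    simp only [dpad, List.sum_cons, List.length_cons, h]
    have : (l.length + 1).choose 2 = l.length.choose 2 + l.length := by
      rw [Nat.choose_succ_succ]
      simp [Nat.choose_one_right, Nat.add_comm]
    rw [this]
    ring

theorem dpad_pos (d : ℕ) : ∀ l : List ℕ, ∀ b ∈ dpad d l, 0 < b
  | a :: l, b, hb => by
    rcases List.mem_cons.1 hb with h | h
    · omega
    · exact dpad_pos d l b h

theorem dpad_bound (d : ℕ) : ∀ (l : List ℕ) (a : ℕ), (∀ x ∈ l, x ≤ a) →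
    ∀ b ∈ dpad d l, b + d ≤ a + 1 + d * l.length
  | c :: l, a, h, b, hb => by
    rcases List.mem_cons.1 hb with rfl | hmem
    · have : c ≤ a := h c List.mem_cons_self
      simp only [List.length_cons, Nat.mul_succ]
      omega
    · have := dpad_bound d l a (fun x hx => h x (List.mem_cons_of_mem _ hx)) b hmem
      simp only [List.length_cons, Nat.mul_succ]
      omega

theorem dpad_pairwise (d : ℕ) : ∀ l : List ℕ, l.Pairwise (· ≥ ·) →
    (dpad d l).Pairwise (fun a b => b + d ≤ a)
  | [], _ => List.Pairwise.nil
  | a :: l, h => by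
    rw [List.pairwise_cons] at h
    refine List.Pairwise.cons ?_ (dpad_pairwise d l h.2)
    intro b hb
    exact dpad_bound d l a h.1 b hb

theorem dpad_inj (d : ℕ) : ∀ l l' : List ℕ, dpad d l = dpad d l' → l = l'
  | [], [], _ => rfl
  | [], a :: l, h => by simp [dpad] at h
  | a :: l, [], h => by simp [dpad] at h
  | a :: l, a' :: l', h => by
    simp only [dpad, List.cons.injEq] at h
    have hl : l = l' := dpad_inj d l l' h.2
    subst hl
    have : a = a' := by omega
    simp [this]

theorem minBound (d : ℕ) : ∀ (l : List ℕ) (a : ℕ),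
    (a :: l).Pairwise (fun x y => y + d ≤ x) → (∀ x ∈ a :: l, 1 ≤ x) →
    1 + d * l.length ≤ a
  | [], a, _, h1 => by simpa using h1 a (by simp)
  | b :: l, a, hp, h1 => by
    have hba : b + d ≤ a := (List.pairwise_cons.1 hp).1 b (by simp)
    have hb := minBound d l b (List.pairwise_cons.1 hp).2
      (fun x hx => h1 x (List.mem_cons_of_mem _ hx))
    simp only [List.length_cons, Nat.mul_succ]
    omega

theorem dpad_dun (d : ℕ) : ∀ l : List ℕ,
    l.Pairwise (fun x y => y + d ≤ x) → (∀ x ∈ l, 1 ≤ x) →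
    dpad d (dun d l) = l
  | [], _, _ => rfl
  | a :: l, hp, h1 => by
    have hb := minBound d l a hp h1
    have ih := dpad_dun d l (List.pairwise_cons.1 hp).2
      (fun x hx => h1 x (List.mem_cons_of_mem _ hx))
    simp only [dun, dpad, ih, dun_length]
    congr 1
    omega

theorem dun_sorted (d : ℕ) : ∀ l : List ℕ,
    l.Pairwise (fun x y => y + d ≤ x) → (∀ x ∈ l, 1 ≤ x) →
    (dun d l).Pairwise (· ≥ ·)
  | [], _, _ => List.Pairwise.nil
  | [a], _, _ => List.pairwise_singleton _ _
  | a :: b :: l, hp, h1 => by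
    have hp' := (List.pairwise_cons.1 hp).2
    have ih := dun_sorted d (b :: l) hp' (fun x hx => h1 x (List.mem_cons_of_mem _ hx))
    have hba : b + d ≤ a := (List.pairwise_cons.1 hp).1 b (by simp)
    have hb := minBound d l b hp' (fun x hx => h1 x (List.mem_cons_of_mem _ hx))
    have ih' : List.IsChain (· ≥ ·) (dun d (b :: l)) := List.isChain_iff_pairwise.mpr ih
    refine List.isChain_iff_pairwise.mp (List.IsChain.cons_cons ?_ ih')
    show b - (1 + d * l.length) ≤ a - (1 + d * (b :: l).length)
    simp only [List.length_cons, Nat.mul_succ]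
    omega

theorem ddistant_coe_of_pairwise {d : ℕ} {l : List ℕ}
    (h : l.Pairwise (fun x y => d ≤ max x y - min x y)) :
    Multiset.DDistant d (↑l : Multiset ℕ) := by
  intro a ha b hb
  rcases eq_or_ne b a with hba | hne
  · subst hba
    have h2 : 2 ≤ l.count b := by
      have h3 : 1 ≤ Multiset.count b ((↑l : Multiset ℕ).erase b) :=
        Multiset.one_le_count_iff_mem.2 hb
      rw [Multiset.count_erase_self] at h3
      simp only [Multiset.coe_count] at h3
      omega
    have hs : List.Sublist (List.replicate 2 b) l := List.replicate_sublist_iff.2 h2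
    have := List.pairwise_iff_forall_sublist.1 h (show List.Sublist [b, b] l from hs)
    simpa using this
  · have hbl : b ∈ l := by
      have : b ∈ (↑l : Multiset ℕ).erase a := hb
      have := Multiset.mem_of_mem_erase this
      simpa using this
    have hal : a ∈ l := by simpa using ha
    have hsym : Symmetric (fun x y : ℕ => d ≤ max x y - min x y) := by
      intro x y hxy
      rwa [max_comm, min_comm]
    haveI : Std.Symm (fun x y : ℕ => d ≤ max x y - min x y) := ⟨fun _ _ h => hsym h⟩
    exact h.forall hal hbl hne.symm
theorem pairwise_of_ddistant {d : ℕ} {l : List ℕ} (hs : l.Pairwise (· ≥ ·))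
    (hd : Multiset.DDistant d (↑l : Multiset ℕ)) :
    l.Pairwise (fun x y => y + d ≤ x) := by
  rw [List.pairwise_iff_forall_sublist]
  intro a b hab
  have hba : b ≤ a := List.pairwise_iff_forall_sublist.1 hs hab
  have hmem : (↑[a, b] : Multiset ℕ) ≤ ↑l := hab.subperm
  have ha : a ∈ (↑l : Multiset ℕ) := Multiset.mem_of_le hmem (by simp)
  have hbe : b ∈ (↑l : Multiset ℕ).erase a := by
    have : (↑[a, b] : Multiset ℕ) = a ::ₘ {b} := by rfl
    rw [this] at hmem
    have := Multiset.erase_le_erase a hmem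
    rw [Multiset.erase_cons_head] at this
    exact Multiset.mem_of_le this (by simp)
  have := hd a ha b hbe
  rw [max_eq_left hba, min_eq_right hba] at this
  omega

def plist (n : ℕ) (p : Nat.Partition n) : List ℕ :=
  (p.parts.sort (· ≥ ·)) ++ List.replicate (n - p.parts.card) 0

theorem parts_card_le (n : ℕ) (p : Nat.Partition n) : p.parts.card ≤ n := by
  have h : p.parts.card • 1 ≤ p.parts.sum :=
    Multiset.card_nsmul_le_sum (fun x hx => p.parts_pos hx)
  simpa [p.parts_sum] using h

theorem plist_sorted (n : ℕ) (p : Nat.Partition n) : (plist n p).Pairwise (· ≥ ·) := by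
  rw [plist]
  refine List.pairwise_append.2 ⟨Multiset.pairwise_sort _ _, ?_, ?_⟩
  · exact List.pairwise_replicate.2 (by simp)
  · intro a _ b hb
    have : b = 0 := List.eq_of_mem_replicate hb
    omega

theorem plist_length (n : ℕ) (p : Nat.Partition n) : (plist n p).length = n := by
  rw [plist]
  simp only [List.length_append, List.length_replicate, Multiset.length_sort]
  have := parts_card_le n p
  omega

theorem plist_sum (n : ℕ) (p : Nat.Partition n) : (plist n p).sum = n := by
  rw [plist]
  simp only [List.sum_append, List.sum_replicate, smul_zero, add_zero]
  calc (p.parts.sort (· ≥ ·)).sum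
      = ((↑(p.parts.sort (· ≥ ·)) : Multiset ℕ)).sum := (Multiset.sum_coe _).symm
    _ = p.parts.sum := by rw [Multiset.sort_eq]
    _ = n := p.parts_sum

def phi (n d : ℕ) (p : Nat.Partition n) :
    {q : Nat.Partition (2 * n + d * n.choose 2) //
      q.parts.card = n ∧ Multiset.DDistant d q.parts} := by
  refine ⟨⟨↑(dpad d (plist n p)), ?_, ?_⟩, ?_, ?_⟩
  · intro a ha
    exact dpad_pos d (plist n p) a (by simpa using ha)
  · rw [Multiset.sum_coe, dpad_sum, plist_sum, plist_length]
    ring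
  · simp [dpad_length, plist_length]
  · refine ddistant_coe_of_pairwise ((dpad_pairwise d _ (plist_sorted n p)).imp ?_)
    intro a b h
    rw [max_eq_left (by omega), min_eq_right (by omega)]
    omega

theorem phi_inj (n d : ℕ) : Function.Injective (phi n d) := by
  intro p p' h
  have hparts : (↑(dpad d (plist n p)) : Multiset ℕ) = ↑(dpad d (plist n p')) := by
    have := congrArg (fun q => q.1.parts) h
    simpa [phi] using this
  have hperm : List.Perm (dpad d (plist n p)) (dpad d (plist n p')) := Multiset.coe_eq_coe.1 hparts
  have hsorted : ∀ q : Nat.Partition n, (dpad d (plist n q)).Pairwise (· ≥ ·) := by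
    intro q
    exact (dpad_pairwise d _ (plist_sorted n q)).imp (fun h => by omega)
  have heq : dpad d (plist n p) = dpad d (plist n p') :=
    List.Perm.eq_of_pairwise' (hsorted p) (hsorted p') hperm
  have hpl : plist n p = plist n p' := dpad_inj d _ _ heq
  have hfil : ∀ q : Nat.Partition n,
      (plist n q).filter (fun x => x != 0) = q.parts.sort (· ≥ ·) := by
    intro q
    rw [plist, List.filter_append]
    have h1 : (q.parts.sort (· ≥ ·)).filter (fun x => x != 0) = q.parts.sort (· ≥ ·) := by
      rw [List.filter_eq_self]
      intro a ha
      have : a ∈ q.parts := by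
        rw [← Multiset.sort_eq q.parts (· ≥ ·)]
        simpa using ha
      have := q.parts_pos this
      simp only [bne_iff_ne, ne_eq]
      omega
    have h2 : (List.replicate (n - q.parts.card) 0).filter (fun x => x != 0) = [] := by
      simp
    rw [h1, h2, List.append_nil]
  have hsort : p.parts.sort (· ≥ ·) = p'.parts.sort (· ≥ ·) := by
    rw [← hfil p, ← hfil p', hpl]
  have : p.parts = p'.parts := by
    rw [← Multiset.sort_eq p.parts (· ≥ ·), ← Multiset.sort_eq p'.parts (· ≥ ·), hsort]
  exact Nat.Partition.ext this

theorem phi_surj (n d : ℕ) : Function.Surjective (phi n d) := by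
  rintro ⟨q, hcard, hdist⟩
  set m : List ℕ := q.parts.sort (· ≥ ·) with hm_def
  have hm : (↑m : Multiset ℕ) = q.parts := Multiset.sort_eq _ _
  have hmlen : m.length = n := by
    have : (↑m : Multiset ℕ).card = n := by rw [hm]; exact hcard
    simpa using this
  have hmsort : m.Pairwise (· ≥ ·) := Multiset.pairwise_sort _ _
  have hp : m.Pairwise (fun x y => y + d ≤ x) :=
    pairwise_of_ddistant hmsort (by rwa [hm])
  have h1 : ∀ x ∈ m, 1 ≤ x := by
    intro x hx
    exact q.parts_pos (by rw [← hm]; simpa using hx)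
  set u : List ℕ := dun d m with hu_def
  have hpu : dpad d u = m := dpad_dun d m hp h1
  have husort : u.Pairwise (· ≥ ·) := dun_sorted d m hp h1
  have hulen : u.length = n := by rw [hu_def, dun_length, hmlen]
  have hmsum : m.sum = 2 * n + d * n.choose 2 := by
    have : (↑m : Multiset ℕ).sum = q.parts.sum := by rw [hm]
    rw [Multiset.sum_coe] at this
    rw [this, q.parts_sum]
  have husum : u.sum = n := by
    have h2 : m.sum = u.sum + u.length + d * u.length.choose 2 := by
      rw [← hpu, dpad_sum]
    rw [hulen, hmsum] at h2
    generalize d * n.choose 2 = c at h2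
    omega
  -- split u into positive part and zeros
  set f : List ℕ := u.filter (fun x => x != 0) with hf_def
  set g : List ℕ := u.filter (fun x => !(x != 0)) with hg_def
  have hperm : List.Perm (f ++ g) u := List.filter_append_perm _ u
  have hg0 : ∀ b ∈ g, b = 0 := by
    intro b hb
    have := List.of_mem_filter hb
    simpa using this
  have hgrep : g = List.replicate g.length 0 := List.eq_replicate_of_mem hg0
  have hfg_sorted : (f ++ g).Pairwise (· ≥ ·) := by
    refine List.pairwise_append.2 ⟨husort.filter _, husort.filter _, ?_⟩
    intro a _ b hb
    have := hg0 b hb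
    omega
  have hsplit : u = f ++ g := List.Perm.eq_of_pairwise' husort hfg_sorted hperm.symm
  have hflen : f.length + g.length = n := by
    have := hperm.length_eq
    simp only [List.length_append] at this
    omega
  have hfpos : ∀ {a : ℕ}, a ∈ (↑f : Multiset ℕ) → 0 < a := by
    intro a ha
    have : a ∈ f := by simpa using ha
    have := List.of_mem_filter this
    simp only [bne_iff_ne, ne_eq] at this
    omega
  have hfsum : (↑f : Multiset ℕ).sum = n := by
    rw [Multiset.sum_coe]
    have : u.sum = f.sum + g.sum := by rw [hsplit, List.sum_append]
    have hg_sum : g.sum = 0 := by rw [hgrep]; simp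
    omega
  refine ⟨⟨↑f, hfpos, hfsum⟩, ?_⟩
  apply Subtype.ext
  apply Nat.Partition.ext
  show (↑(dpad d (plist n ⟨↑f, hfpos, hfsum⟩)) : Multiset ℕ) = q.parts
  have hfsorted : f.Pairwise (· ≥ ·) := husort.filter _
  have hsortf : (↑f : Multiset ℕ).sort (· ≥ ·) = f := by
    refine List.Perm.eq_of_pairwise' (Multiset.pairwise_sort _ _) hfsorted ?_
    exact Multiset.coe_eq_coe.1 (Multiset.sort_eq _ _)
  have hplist : plist n ⟨↑f, hfpos, hfsum⟩ = u := by
    rw [plist]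
    show (↑f : Multiset ℕ).sort (· ≥ ·) ++ List.replicate (n - (↑f : Multiset ℕ).card) 0 = u
    rw [hsortf, hsplit]
    congr 1
    rw [hgrep]
    congr 1
    simp only [Multiset.coe_card]
    omega
  rw [hplist, hpu, hm]


/-- `p(n) = p^{(d)}_n(2n + d·C(n,2))`. -/
theorem stmt_15 (n d : ℕ) :
    Nat.card n.Partition = distantPartitions d n (2 * n + d * n.choose 2) := by
  exact Nat.card_eq_of_bijective (phi n d) ⟨phi_inj n d, phi_surj n d⟩
end
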